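/- Let n ≥ 1 and d ≥ 1 be integers, P > 0, σ₀² > 0, ε > 0 with dP ≥ 2εσ₀². Set σ_pri² = (dP − 2εσ₀²)/(2εn + d), P' = P − σ_pri², and σ'² = σ₀² + n·σ_pri². For reals A, B, α, β define the per-coordinate risk r_{A,B,α,β}(t) = α²·(n(B−A)²·t(1−t) + σ'²) + (α·n·(A + (B−A)t) + β − t)² for t ∈ [0,1]. Then the infimum, over all (A, B, α, β) with A² ≤ P' and B² ≤ P', of d · sup_{t ∈ [0,1]} r_{A,B,α,β}(t) equals (d/(4(√n+1)²))·(1 + d/(2nε)) if σ'² ≤ n^{3/2} P', and (d/4)·1/(1 + n·(2nε/d)) if σ'² ≥ n^{3/2} P'. -/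

import Mathlib

set_option maxHeartbeats 1000000


open Real

/-- Per-coordinate mean squared error of the affine estimator `αY + β` when `n` users each
transmit `A` (bit `0`) or `B` (bit `1`) over a Gaussian MAC with noise variance `σsq`,
the bit being Bernoulli(`t`). -/
noncomputable def perCoordRisk (n : ℕ) (σsq A B α β t : ℝ) : ℝ :=
  α ^ 2 * ((n : ℝ) * (B - A) ^ 2 * t * (1 - t) + σsq) +
    (α * (n : ℝ) * (A + (B - A) * t) + β - t) ^ 2

/-- Worst-case (over `t ∈ [0,1]`) per-coordinate risk. -/
noncomputable def worstRisk (n : ℕ) (σsq A B α β : ℝ) : ℝ :=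
  sSup (perCoordRisk n σsq A B α β '' Set.Icc (0 : ℝ) 1)

lemma risk_le_worst (n : ℕ) (σsq A B α β t : ℝ) (ht : t ∈ Set.Icc (0:ℝ) 1) :
    perCoordRisk n σsq A B α β t ≤ worstRisk n σsq A B α β := by
  apply le_csSup
  · apply IsCompact.bddAbove_image isCompact_Icc
    apply Continuous.continuousOn
    unfold perCoordRisk
    fun_prop
  · exact ⟨t, ht, rfl⟩

lemma lower1 (n : ℕ) (hn : 1 ≤ n) (σsq P' A B α β : ℝ) (hσ : 0 < σsq) (hP' : 0 < P')
    (hA : A^2 ≤ P') (hB : B^2 ≤ P') (hcase : σsq ≤ (n:ℝ) * Real.sqrt n * P') :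
    (1 + σsq/(n*P'))/(4*(Real.sqrt n + 1)^2) ≤ worstRisk n σsq A B α β := by
  have hn1 : (1:ℝ) ≤ (n:ℝ) := by exact_mod_cast hn
  have hn0 : (0:ℝ) < n := by linarith
  set w := Real.sqrt (n:ℝ) with hw
  have hwsq : w^2 = (n:ℝ) := Real.sq_sqrt (by positivity)
  have hw0 : 0 ≤ w := Real.sqrt_nonneg _
  have hw1 : 1 ≤ w := by nlinarith
  set s := σsq/((n:ℝ)*P') with hs
  have hs0 : 0 < s := by positivity
  have hsle : s ≤ w := by
    rw [hs, div_le_iff₀ (by positivity)]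
    nlinarith
  set l := (1+s)/(w+1) with hl
  have hl0 : 0 ≤ l := by positivity
  have hl1 : l ≤ 1 := by
    rw [hl, div_le_one (by linarith)]; linarith
  have h0 := risk_le_worst n σsq A B α β 0 (by constructor <;> norm_num)
  have h1 := risk_le_worst n σsq A B α β 1 (by constructor <;> norm_num)
  have hh := risk_le_worst n σsq A B α β (1/2) (by constructor <;> norm_num)
  set W := worstRisk n σsq A B α β with hW
  set r0 := perCoordRisk n σsq A B α β 0 with hr0d
  set r1 := perCoordRisk n σsq A B α β 1 with hr1d
  set rh := perCoordRisk n σsq A B α β (1/2) with hrhd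
  have comb : l*((r0+r1)/2) + (1-l)*rh ≤ W := by
    have hm : (r0+r1)/2 ≤ W := by linarith
    calc l*((r0+r1)/2) + (1-l)*rh ≤ l*W + (1-l)*W :=
          add_le_add (mul_le_mul_of_nonneg_left hm hl0)
            (mul_le_mul_of_nonneg_left hh (by linarith))
      _ = W := by ring
  have hr0 : r0 = α^2*σsq + (α*(n:ℝ)*A+β)^2 := by rw [hr0d]; unfold perCoordRisk; ring
  have hr1 : r1 = α^2*σsq + (α*(n:ℝ)*B+β-1)^2 := by rw [hr1d]; unfold perCoordRisk; ring
  have hrh : rh = α^2*((n:ℝ)*(B-A)^2/4 + σsq) + (α*(n:ℝ)*(A+(B-A)*(1/2))+β-1/2)^2 := by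
    rw [hrhd]; unfold perCoordRisk; ring
  set g := α*(n:ℝ)*(B-A) with hg
  have E1a : α^2*σsq + (g-1)^2/4 ≤ (r0+r1)/2 := by
    rw [hr0, hr1, hg]; nlinarith [sq_nonneg ((α*(n:ℝ)*A+β) + (α*(n:ℝ)*B+β-1))]
  have hg2 : g^2/(4*(n:ℝ)) = α^2*((n:ℝ)*(B-A)^2/4) := by
    rw [hg, div_eq_iff (by positivity : (4:ℝ)*(n:ℝ) ≠ 0)]; ring
  have E1b : α^2*σsq + g^2/(4*(n:ℝ)) ≤ rh := by
    rw [hrh, hg2]; nlinarith [sq_nonneg (α*(n:ℝ)*(A+(B-A)*(1/2))+β-1/2)]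
  have E2 : s*g^2/(4*(n:ℝ)) ≤ α^2*σsq := by
    have h4 : (B-A)^2 ≤ 4*P' := by nlinarith [sq_nonneg (A+B)]
    have hsnp : s*((n:ℝ)*P') = σsq := by rw [hs]; field_simp
    have heq : s*g^2/(4*(n:ℝ)) = σsq*α^2*(B-A)^2/(4*P') := by
      rw [div_eq_div_iff (by positivity) (by positivity), hg, ← hsnp]; ring
    rw [heq, div_le_iff₀ (by positivity)]
    nlinarith [mul_nonneg (mul_nonneg (sq_nonneg α) hσ.le) (sub_nonneg.2 h4)]
  have E3 : (1+s)/(4*(w+1)^2) ≤ s*g^2/(4*(n:ℝ)) + l*((g-1)^2/4) + (1-l)*(g^2/(4*(n:ℝ))) := by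
    have hn2 : (n:ℝ) = w^2 := hwsq.symm
    have key : s*g^2/(4*(n:ℝ)) + l*((g-1)^2/4) + (1-l)*(g^2/(4*(n:ℝ))) - (1+s)/(4*(w+1)^2)
        = (1+s)*w*((w+1)*g-w)^2/(4*w^2*(w+1)^2) := by
      rw [hl, hn2]; field_simp; ring
    have pos : 0 ≤ (1+s)*w*((w+1)*g-w)^2/(4*w^2*(w+1)^2) :=
      div_nonneg (mul_nonneg (mul_nonneg (by linarith) hw0) (sq_nonneg _)) (by positivity)
    linarith
  calc (1 + σsq/(n*P'))/(4*(w + 1)^2) = (1+s)/(4*(w+1)^2) := by rw [hs]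
    _ ≤ s*g^2/(4*(n:ℝ)) + l*((g-1)^2/4) + (1-l)*(g^2/(4*(n:ℝ))) := E3
    _ ≤ α^2*σsq + l*((g-1)^2/4) + (1-l)*(g^2/(4*(n:ℝ))) := by linarith
    _ = l*(α^2*σsq + (g-1)^2/4) + (1-l)*(α^2*σsq + g^2/(4*(n:ℝ))) := by ring
    _ ≤ l*((r0+r1)/2) + (1-l)*rh :=
        add_le_add (mul_le_mul_of_nonneg_left E1a hl0)
          (mul_le_mul_of_nonneg_left E1b (by linarith))
    _ ≤ W := comb
lemma lower2 (n : ℕ) (hn : 1 ≤ n) (σsq P' A B α β : ℝ) (hσ : 0 < σsq) (hP' : 0 < P')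
    (hA : A^2 ≤ P') (hB : B^2 ≤ P') :
    σsq/(4*(σsq + (n:ℝ)^2*P')) ≤ worstRisk n σsq A B α β := by
  have hn1 : (1:ℝ) ≤ (n:ℝ) := by exact_mod_cast hn
  have hn0 : (0:ℝ) < n := by linarith
  set s := σsq/((n:ℝ)*P') with hs
  have hs0 : 0 < s := by positivity
  have hsnp : s*((n:ℝ)*P') = σsq := by rw [hs]; field_simp
  have h0 := risk_le_worst n σsq A B α β 0 (by constructor <;> norm_num)
  have h1 := risk_le_worst n σsq A B α β 1 (by constructor <;> norm_num)
  set W := worstRisk n σsq A B α β with hW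
  set r0 := perCoordRisk n σsq A B α β 0 with hr0d
  set r1 := perCoordRisk n σsq A B α β 1 with hr1d
  have hr0 : r0 = α^2*σsq + (α*(n:ℝ)*A+β)^2 := by rw [hr0d]; unfold perCoordRisk; ring
  have hr1 : r1 = α^2*σsq + (α*(n:ℝ)*B+β-1)^2 := by rw [hr1d]; unfold perCoordRisk; ring
  set g := α*(n:ℝ)*(B-A) with hg
  have E1a : α^2*σsq + (g-1)^2/4 ≤ (r0+r1)/2 := by
    rw [hr0, hr1, hg]; nlinarith [sq_nonneg ((α*(n:ℝ)*A+β) + (α*(n:ℝ)*B+β-1))]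
  have E2 : s*g^2/(4*(n:ℝ)) ≤ α^2*σsq := by
    have h4 : (B-A)^2 ≤ 4*P' := by nlinarith [sq_nonneg (A+B)]
    have heq : s*g^2/(4*(n:ℝ)) = σsq*α^2*(B-A)^2/(4*P') := by
      rw [div_eq_div_iff (by positivity) (by positivity), hg, ← hsnp]; ring
    rw [heq, div_le_iff₀ (by positivity)]
    nlinarith [mul_nonneg (mul_nonneg (sq_nonneg α) hσ.le) (sub_nonneg.2 h4)]
  have E3 : s/(4*(s+(n:ℝ))) ≤ s*g^2/(4*(n:ℝ)) + (g-1)^2/4 := by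
    have key : s*g^2/(4*(n:ℝ)) + (g-1)^2/4 - s/(4*(s+(n:ℝ)))
        = ((s+(n:ℝ))*g-(n:ℝ))^2/(4*(n:ℝ)*(s+(n:ℝ))) := by
      field_simp
      ring
    have pos : 0 ≤ ((s+(n:ℝ))*g-(n:ℝ))^2/(4*(n:ℝ)*(s+(n:ℝ))) := by positivity
    linarith
  have htarget : σsq/(4*(σsq + (n:ℝ)^2*P')) = s/(4*(s+(n:ℝ))) := by
    rw [div_eq_div_iff (by positivity) (by positivity), ← hsnp]; ring
  rw [htarget]
  calc s/(4*(s+(n:ℝ))) ≤ s*g^2/(4*(n:ℝ)) + (g-1)^2/4 := E3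
    _ ≤ α^2*σsq + (g-1)^2/4 := by linarith
    _ ≤ (r0+r1)/2 := E1a
    _ ≤ W := by linarith

lemma upper1 (n : ℕ) (hn : 1 ≤ n) (σsq P' : ℝ) (hσ : 0 < σsq) (hP' : 0 < P') :
    ∃ A B α β : ℝ, A^2 ≤ P' ∧ B^2 ≤ P' ∧
      worstRisk n σsq A B α β = (1 + σsq/(n*P'))/(4*(Real.sqrt n + 1)^2) := by
  have hn1 : (1:ℝ) ≤ (n:ℝ) := by exact_mod_cast hn
  have hn0 : (0:ℝ) < n := by linarith
  set w := Real.sqrt (n:ℝ) with hw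
  have hwsq : w^2 = (n:ℝ) := Real.sq_sqrt (by positivity)
  have hw0 : 0 ≤ w := Real.sqrt_nonneg _
  have hw1 : 1 ≤ w := by nlinarith
  set p := Real.sqrt P' with hp
  have hpsq : p^2 = P' := Real.sq_sqrt hP'.le
  have hp0 : 0 < p := Real.sqrt_pos.2 hP'
  set α := 1/(2*w*(w+1)*p) with hα
  refine ⟨-p, p, α, 1/2, by rw [← hpsq]; nlinarith, by rw [← hpsq], ?_⟩
  set V := (1 + σsq/(n*P'))/(4*(w + 1)^2) with hV
  have hconst : ∀ t : ℝ, perCoordRisk n σsq (-p) p α (1/2) t = V := by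
    intro t
    rw [hV]
    unfold perCoordRisk
    rw [hα, show (n:ℝ) = w^2 from hwsq.symm, show P' = p^2 from hpsq.symm]
    have hw1' : w + 1 ≠ 0 := by positivity
    have hwne : w ≠ 0 := by positivity
    have hpne : p ≠ 0 := by positivity
    field_simp
    ring
  unfold worstRisk
  have himg : perCoordRisk n σsq (-p) p α (1/2) '' Set.Icc (0:ℝ) 1 = {V} := by
    apply Set.eq_singleton_iff_unique_mem.2
    constructor
    · exact ⟨0, by constructor <;> norm_num, hconst 0⟩
    · rintro x ⟨t, ht, rfl⟩; exact hconst t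
  rw [himg, csSup_singleton]

lemma upper2 (n : ℕ) (hn : 1 ≤ n) (σsq P' : ℝ) (hσ : 0 < σsq) (hP' : 0 < P')
    (hcase : (n:ℝ) * Real.sqrt n * P' ≤ σsq) :
    ∃ A B α β : ℝ, A^2 ≤ P' ∧ B^2 ≤ P' ∧
      worstRisk n σsq A B α β = σsq/(4*(σsq + (n:ℝ)^2*P')) := by
  have hn1 : (1:ℝ) ≤ (n:ℝ) := by exact_mod_cast hn
  have hn0 : (0:ℝ) < n := by linarith
  set w := Real.sqrt (n:ℝ) with hw
  have hwsq : w^2 = (n:ℝ) := Real.sq_sqrt (by positivity)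
  have hw0 : 0 ≤ w := Real.sqrt_nonneg _
  have hw1 : 1 ≤ w := by nlinarith
  have hcase2 : (n:ℝ)^3*P'^2 ≤ σsq^2 := by
    have heq : (n:ℝ)^3*P'^2 = ((n:ℝ)*w*P')^2 := by
      rw [mul_pow, mul_pow, hwsq]; ring
    rw [heq]
    exact pow_le_pow_left₀ (by positivity) hcase 2
  set p := Real.sqrt P' with hp
  have hpsq : p^2 = P' := Real.sq_sqrt hP'.le
  have hp0 : 0 < p := Real.sqrt_pos.2 hP'
  have hD : 0 < σsq + (n:ℝ)^2*P' := by positivity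
  set α := (n:ℝ)*P'/(2*p*(σsq + (n:ℝ)^2*P')) with hα
  refine ⟨-p, p, α, 1/2, by rw [← hpsq]; nlinarith, by rw [← hpsq], ?_⟩
  set V := σsq/(4*(σsq + (n:ℝ)^2*P')) with hV
  have hr0 : perCoordRisk n σsq (-p) p α (1/2) 0 = V := by
    rw [hV]
    unfold perCoordRisk
    rw [hα, show P' = p^2 from hpsq.symm]
    have hpne : p ≠ 0 := by positivity
    have hDne : σsq + (n:ℝ)^2*p^2 ≠ 0 := by rw [hpsq]; positivity
    field_simp
    ring
  have key : ∀ t : ℝ, perCoordRisk n σsq (-p) p α (1/2) 0 - perCoordRisk n σsq (-p) p α (1/2) t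
      = ((σsq^2 - (n:ℝ)^3*P'^2)/((σsq + (n:ℝ)^2*P')^2)) * (t*(1-t)) := by
    intro t
    unfold perCoordRisk
    rw [hα, show P' = p^2 from hpsq.symm]
    have hpne : p ≠ 0 := by positivity
    have hDne : σsq + (n:ℝ)^2*p^2 ≠ 0 := by rw [hpsq]; positivity
    field_simp
    ring
  have hgreat : IsGreatest (perCoordRisk n σsq (-p) p α (1/2) '' Set.Icc (0:ℝ) 1) V := by
    constructor
    · exact ⟨0, by constructor <;> norm_num, hr0⟩
    · rintro x ⟨t, ht, rfl⟩
      have hk := key t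
      rw [hr0] at hk
      have hC : 0 ≤ (σsq^2 - (n:ℝ)^3*P'^2)/((σsq + (n:ℝ)^2*P')^2) :=
        div_nonneg (by linarith) (sq_nonneg _)
      have ht' : 0 ≤ t*(1-t) := mul_nonneg ht.1 (by linarith [ht.2])
      nlinarith [mul_nonneg hC ht']
  unfold worstRisk
  exact hgreat.csSup_eq

/-- Corollary 2. Minimax error of the ε-robust over-the-air scheme for
the product Bernoulli model: with `σ_pri² = (dP − 2εσ₀²)/(2εn + d)`, `P' = P − σ_pri²`,
`σ'² = σ₀² + nσ_pri²`, the minimax risk equals `(d/(4(√n+1)²))(1 + d/(2nε))` when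
`σ'² ≤ n^{3/2}P'`, and `(d/4)/(1 + n·(2nε/d))` when `σ'² ≥ n^{3/2}P'`. -/
theorem robust_bernoulli_minimax_risk
    (n d : ℕ) (hn : 1 ≤ n) (hd : 1 ≤ d)
    (P σ0sq ε : ℝ) (hP : 0 < P) (hσ0 : 0 < σ0sq) (hε : 0 < ε)
    (hpow : (d : ℝ) * P ≥ 2 * ε * σ0sq)
    (σpri2 P' σ'sq : ℝ)
    (hσpri : σpri2 = ((d : ℝ) * P - 2 * ε * σ0sq) / (2 * ε * n + d))
    (hP' : P' = P - σpri2) (hσ' : σ'sq = σ0sq + (n : ℝ) * σpri2) :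
    (σ'sq ≤ (n : ℝ) ^ ((3 : ℝ) / 2) * P' →
      sInf {x : ℝ | ∃ A B α β : ℝ, A ^ 2 ≤ P' ∧ B ^ 2 ≤ P' ∧
            x = (d : ℝ) * worstRisk n σ'sq A B α β}
        = ((d : ℝ) / (4 * (Real.sqrt n + 1) ^ 2)) * (1 + (d : ℝ) / (2 * (n : ℝ) * ε)))
    ∧ (σ'sq ≥ (n : ℝ) ^ ((3 : ℝ) / 2) * P' →
      sInf {x : ℝ | ∃ A B α β : ℝ, A ^ 2 ≤ P' ∧ B ^ 2 ≤ P' ∧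
            x = (d : ℝ) * worstRisk n σ'sq A B α β}
        = ((d : ℝ) / 4) * (1 / (1 + (n : ℝ) * (2 * (n : ℝ) * ε / d)))) := by
  have hn1 : (1:ℝ) ≤ (n:ℝ) := by exact_mod_cast hn
  have hn0 : (0:ℝ) < n := by linarith
  have hd1 : (1:ℝ) ≤ (d:ℝ) := by exact_mod_cast hd
  have hd0 : (0:ℝ) < d := by linarith
  have hden : (0:ℝ) < 2*ε*n + d := by positivity
  have hσpri0 : 0 ≤ σpri2 := by
    rw [hσpri]; exact div_nonneg (by linarith) hden.le
  have hP'pos : 0 < P' := by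
    rw [hP', hσpri, sub_pos, div_lt_iff₀ hden]
    nlinarith [mul_pos hε hσ0, mul_pos (mul_pos hε hn0) hP]
  have hσ'pos : 0 < σ'sq := by
    rw [hσ']
    nlinarith [mul_nonneg hn0.le hσpri0]
  have hkey : 2*ε*σ'sq = (d:ℝ)*P' := by
    rw [hσ', hP', hσpri]
    field_simp
    ring
  have hpow32 : (n:ℝ) ^ ((3:ℝ)/2) = (n:ℝ) * Real.sqrt n := by
    rw [show (3:ℝ)/2 = 1 + 1/2 by norm_num, Real.rpow_add hn0, Real.rpow_one,
      ← Real.sqrt_eq_rpow]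
  constructor
  · intro hc
    rw [hpow32] at hc
    obtain ⟨A, B, α, β, hA, hB, hwr⟩ := upper1 n hn σ'sq P' hσ'pos hP'pos
    have hleast : IsLeast {x : ℝ | ∃ A B α β : ℝ, A ^ 2 ≤ P' ∧ B ^ 2 ≤ P' ∧
        x = (d : ℝ) * worstRisk n σ'sq A B α β}
        ((d:ℝ) * ((1 + σ'sq/(n*P'))/(4*(Real.sqrt n + 1)^2))) := by
      constructor
      · exact ⟨A, B, α, β, hA, hB, by rw [hwr]⟩
      · rintro x ⟨A', B', α', β', hA', hB', rfl⟩
        exact mul_le_mul_of_nonneg_left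
          (lower1 n hn σ'sq P' A' B' α' β' hσ'pos hP'pos hA' hB' hc) hd0.le
    rw [hleast.csInf_eq]
    have h2 : σ'sq/((n:ℝ)*P') = (d:ℝ)/(2*(n:ℝ)*ε) := by
      rw [div_eq_div_iff (by positivity) (by positivity)]
      nlinarith [hkey]
    rw [h2]
    ring
  · intro hc
    rw [hpow32] at hc
    obtain ⟨A, B, α, β, hA, hB, hwr⟩ := upper2 n hn σ'sq P' hσ'pos hP'pos hc
    have hleast : IsLeast {x : ℝ | ∃ A B α β : ℝ, A ^ 2 ≤ P' ∧ B ^ 2 ≤ P' ∧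
        x = (d : ℝ) * worstRisk n σ'sq A B α β}
        ((d:ℝ) * (σ'sq/(4*(σ'sq + (n:ℝ)^2*P')))) := by
      constructor
      · exact ⟨A, B, α, β, hA, hB, by rw [hwr]⟩
      · rintro x ⟨A', B', α', β', hA', hB', rfl⟩
        exact mul_le_mul_of_nonneg_left
          (lower2 n hn σ'sq P' A' B' α' β' hσ'pos hP'pos hA' hB') hd0.le
    rw [hleast.csInf_eq]
    have hP'eq : P' = 2*ε*σ'sq/(d:ℝ) := by
      rw [eq_div_iff hd0.ne']; linarith [hkey]
    rw [hP'eq]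
    have hσne : σ'sq ≠ 0 := hσ'pos.ne'
    field_simp
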